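/- Let A be a noetherian commutative ring graded by an abelian group ι, let I be a homogeneous ideal of A, and let I = Q₁ ∩ ⋯ ∩ Q_r be a minimal G-primary decomposition. Then the set {(√Q₁)*, …, (√Q_r)*} equals the set of all ideals of the form I : J, where J ranges over homogeneous ideals of A such that the colon ideal I : J is G-prime. In particular, this set depends only on I and not on the chosen minimal G-primary decomposition. -/

import Mathlib

/-- A homogeneous ideal `P` of a graded ring `A` is `G`-prime if `P = 𝔭*`
(the homogeneous core) for some prime ideal `𝔭` of `A`. -/
def Ideal.IsGPrime {ι : Type*} [AddCommGroup ι] [DecidableEq ι] {A : Type*} [CommRing A]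
    (𝒜 : ι → AddSubgroup A) [GradedRing 𝒜] (P : Ideal A) : Prop :=
  ∃ 𝔭 : Ideal A, 𝔭.IsPrime ∧ P = (𝔭.homogeneousCore 𝒜).toIdeal

/-- A homogeneous ideal `Q` of a graded ring `A` is `G`-primary if `Q ≠ A` and for all
homogeneous ideals `I`, `J` with `I·J ⊆ Q` and `J ⊄ Q`, one has `I ⊆ (√Q)*`. -/
def Ideal.IsGPrimary {ι : Type*} [AddCommGroup ι] [DecidableEq ι] {A : Type*} [CommRing A]
    (𝒜 : ι → AddSubgroup A) [GradedRing 𝒜] (Q : Ideal A) : Prop :=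
  Q ≠ ⊤ ∧ ∀ I J : Ideal A, I.IsHomogeneous 𝒜 → J.IsHomogeneous 𝒜 →
    I * J ≤ Q → ¬ J ≤ Q → I ≤ (Q.radical.homogeneousCore 𝒜).toIdeal

/-- A minimal `G`-primary decomposition of a homogeneous ideal `I`: each `Q i` is a
`G`-primary homogeneous ideal, `I = ⋂ i, Q i`, the `G`-radicals `(√(Q i))*` are pairwise
distinct, and no component is redundant. -/
def IsMinimalGPrimaryDecomposition {ι : Type*} [AddCommGroup ι] [DecidableEq ι]
    {A : Type*} [CommRing A] (𝒜 : ι → AddSubgroup A) [GradedRing 𝒜]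
    {κ : Type*} [Fintype κ] (I : Ideal A) (Q : κ → Ideal A) : Prop :=
  (∀ i, (Q i).IsHomogeneous 𝒜 ∧ (Q i).IsGPrimary 𝒜) ∧
  I = ⨅ i, Q i ∧
  (∀ i j, ((Q i).radical.homogeneousCore 𝒜).toIdeal
      = ((Q j).radical.homogeneousCore 𝒜).toIdeal → i = j) ∧
  (∀ i, ¬ (⨅ j, ⨅ (_ : j ≠ i), Q j) ≤ Q i)

section aux

open DirectSum

variable {ι : Type*} [AddCommGroup ι] [DecidableEq ι] {A : Type*} [CommRing A]
  (𝒜 : ι → AddSubgroup A) [GradedRing 𝒜]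

lemma le_homCore {J I : Ideal A} (hJ : J.IsHomogeneous 𝒜) (h : J ≤ I) :
    J ≤ (I.homogeneousCore 𝒜).toIdeal :=
  calc J = (J.homogeneousCore 𝒜).toIdeal := hJ.toIdeal_homogeneousCore_eq_self.symm
    _ ≤ _ := Ideal.homogeneousCore'_mono 𝒜 h

lemma colon_isHomogeneous {I J : Ideal A} (hI : I.IsHomogeneous 𝒜) (hJ : J.IsHomogeneous 𝒜) :
    (Submodule.colon I J).IsHomogeneous 𝒜 := by
  classical
  intro d a ha
  rw [Submodule.mem_colon] at ha ⊢
  intro j hj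
  rw [smul_eq_mul, ← DirectSum.sum_support_decompose 𝒜 j, Finset.mul_sum]
  refine Ideal.sum_mem _ fun e _ => ?_
  have h1 : a * (decompose 𝒜 j e : A) ∈ I := by
    have := ha _ (hJ e hj); rwa [smul_eq_mul] at this
  have h2 := hI (d + e) h1
  rwa [DirectSum.coe_decompose_mul_add_of_right_mem 𝒜 (decompose 𝒜 j e).2] at h2

lemma pow_isHomogeneous {I : Ideal A} (hI : I.IsHomogeneous 𝒜) (n : ℕ) :
    (I ^ n).IsHomogeneous 𝒜 := by
  induction n with
  | zero => simpa [Ideal.one_eq_top] using Ideal.IsHomogeneous.top 𝒜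
  | succ n ih => rw [pow_succ]; exact ih.mul hI

lemma colon_iInf {κ : Type*} (Q : κ → Ideal A) (J : Ideal A) :
    Submodule.colon (⨅ i, Q i) J = ⨅ i, Submodule.colon (Q i) J := by
  ext x
  simp only [Submodule.mem_colon, Submodule.mem_iInf]
  exact ⟨fun h i p hp => h p hp i, fun h p hp i => h i p hp⟩

lemma colon_eq_top_of_le {Q J : Ideal A} (h : J ≤ Q) : Submodule.colon Q J = ⊤ := by
  rw [eq_top_iff]
  intro x _
  rw [Submodule.mem_colon]
  exact fun p hp => Submodule.smul_mem _ _ (h hp)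

lemma colon_mul_le_self (Q J : Ideal A) : Submodule.colon Q J * J ≤ Q := by
  rw [Ideal.mul_le]
  intro x hx y hy
  have := Submodule.mem_colon.1 hx y hy
  rwa [smul_eq_mul] at this

lemma gprimary_core_mul_le [IsNoetherianRing A] {Q : Ideal A} (hQ : Q.IsGPrimary 𝒜)
    {I J : Ideal A} (hIh : I.IsHomogeneous 𝒜) (hJh : J.IsHomogeneous 𝒜)
    (hle : I * J ≤ (Q.radical.homogeneousCore 𝒜).toIdeal) :
    I ≤ (Q.radical.homogeneousCore 𝒜).toIdeal ∨ J ≤ (Q.radical.homogeneousCore 𝒜).toIdeal := by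
  have hrad : I * J ≤ Q.radical := hle.trans (Ideal.toIdeal_homogeneousCore_le _ _)
  obtain ⟨n, hn⟩ := Ideal.exists_pow_le_of_le_radical_of_fg_radical hrad (IsNoetherian.noetherian _)
  match n, hn with
  | 0, hn =>
    exfalso
    apply hQ.1
    rw [pow_zero, Ideal.one_eq_top] at hn
    exact top_le_iff.1 hn
  | (m + 1), hn =>
    rw [mul_pow] at hn
    by_cases hJQ : J ^ (m + 1) ≤ Q
    · right
      refine le_homCore 𝒜 hJh fun x hx => ?_
      exact ⟨m + 1, hJQ (Ideal.pow_mem_pow hx (m + 1))⟩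
    · left
      have h1 : I ^ (m + 1) ≤ (Q.radical.homogeneousCore 𝒜).toIdeal :=
        hQ.2 _ _ (pow_isHomogeneous 𝒜 hIh _) (pow_isHomogeneous 𝒜 hJh _) hn hJQ
      refine le_homCore 𝒜 hIh fun x hx => ?_
      rw [← Ideal.radical_idem]
      exact ⟨m + 1, (h1.trans (Ideal.toIdeal_homogeneousCore_le _ _)) (Ideal.pow_mem_pow hx (m + 1))⟩

lemma gprimary_radical_core_isGPrime [IsNoetherianRing A] {Q : Ideal A} (hQ : Q.IsGPrimary 𝒜) :
    ((Q.radical.homogeneousCore 𝒜).toIdeal).IsGPrime 𝒜 := by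
  set P := (Q.radical.homogeneousCore 𝒜).toIdeal with hP
  have hPh : P.IsHomogeneous 𝒜 := (Q.radical.homogeneousCore 𝒜).isHomogeneous
  have hPne : P ≠ ⊤ := by
    intro h
    apply hQ.1
    rw [← Ideal.radical_eq_top]
    exact top_le_iff.1 (h ▸ Ideal.toIdeal_homogeneousCore_le 𝒜 Q.radical)
  obtain ⟨p, ⟨hPp, hcore⟩, hmax⟩ :=
    set_has_maximal_iff_noetherian.mpr inferInstance
      {𝔞 : Ideal A | P ≤ 𝔞 ∧ (𝔞.homogeneousCore 𝒜).toIdeal ≤ P}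
      ⟨P, le_rfl, Ideal.toIdeal_homogeneousCore_le _ _⟩
  have hpne : p ≠ ⊤ := by
    intro h
    apply hPne
    rw [eq_top_iff]
    calc (⊤ : Ideal A) = ((⊤ : Ideal A).homogeneousCore 𝒜).toIdeal :=
          (Ideal.IsHomogeneous.top 𝒜).toIdeal_homogeneousCore_eq_self.symm
      _ ≤ P := h ▸ hcore
  have hprime : Ideal.IsPrime p := by
    refine ⟨hpne, ?_⟩
    intro a b hab
    by_contra h
    push_neg at h
    obtain ⟨ha, hb⟩ := h
    have key : ∀ c : A, c ∉ p →
        ¬ ((Ideal.homogeneousCore 𝒜 (p ⊔ Ideal.span {c})).toIdeal ≤ P) := by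
      intro c hc
      have hlt : p < p ⊔ Ideal.span {c} := by
        refine lt_of_le_of_ne le_sup_left fun h => hc ?_
        rw [h]
        exact Submodule.mem_sup_right (Ideal.mem_span_singleton_self c)
      intro hcle
      exact hmax _ ⟨hPp.trans le_sup_left, hcle⟩ hlt
    have hmul : (Ideal.homogeneousCore 𝒜 (p ⊔ Ideal.span {a})).toIdeal *
        (Ideal.homogeneousCore 𝒜 (p ⊔ Ideal.span {b})).toIdeal ≤ P := by
      have h1 : (p ⊔ Ideal.span {a}) * (p ⊔ Ideal.span {b}) ≤ p := by
        rw [Ideal.sup_mul, Ideal.mul_sup, Ideal.mul_sup, Ideal.span_singleton_mul_span_singleton]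
        refine sup_le (sup_le Ideal.mul_le_left Ideal.mul_le_left)
          (sup_le Ideal.mul_le_right ?_)
        rwa [Ideal.span_singleton_le_iff_mem]
      have h2 : (Ideal.homogeneousCore 𝒜 (p ⊔ Ideal.span {a})).toIdeal *
          (Ideal.homogeneousCore 𝒜 (p ⊔ Ideal.span {b})).toIdeal ≤ p :=
        le_trans (Ideal.mul_mono (Ideal.toIdeal_homogeneousCore_le _ _)
          (Ideal.toIdeal_homogeneousCore_le _ _)) h1
      exact (le_homCore 𝒜 ((Ideal.homogeneousCore 𝒜 (p ⊔ Ideal.span {a})).isHomogeneous.mul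
        (Ideal.homogeneousCore 𝒜 (p ⊔ Ideal.span {b})).isHomogeneous) h2).trans hcore
    rcases gprimary_core_mul_le 𝒜 hQ (Ideal.homogeneousCore 𝒜 (p ⊔ Ideal.span {a})).isHomogeneous
      (Ideal.homogeneousCore 𝒜 (p ⊔ Ideal.span {b})).isHomogeneous hmul with h | h
    · exact key a ha h
    · exact key b hb h
  exact ⟨p, hprime, le_antisymm (le_homCore 𝒜 hPh hPp) hcore⟩

end aux

theorem gAssociated_gPrimes_eq {ι : Type*} [AddCommGroup ι] [DecidableEq ι]
    {A : Type*} [CommRing A] [IsNoetherianRing A]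
    (𝒜 : ι → AddSubgroup A) [GradedRing 𝒜] {r : ℕ} (I : Ideal A) (hI : I.IsHomogeneous 𝒜)
    (Q : Fin r → Ideal A) (hQ : IsMinimalGPrimaryDecomposition 𝒜 I Q) :
    {P : Ideal A | ∃ i, P = ((Q i).radical.homogeneousCore 𝒜).toIdeal}
      = {P : Ideal A | ∃ J : Ideal A, J.IsHomogeneous 𝒜 ∧
          (Submodule.colon I J).IsGPrime 𝒜 ∧ P = Submodule.colon I J} := by
  classical
  obtain ⟨hQprim, hIQ, hdist, hmin⟩ := hQ
  have hQh : ∀ i, (Q i).IsHomogeneous 𝒜 := fun i => (hQprim i).1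
  ext P
  simp only [Set.mem_setOf_eq]
  constructor
  · rintro ⟨i, rfl⟩
    set Pi := (((Q i).radical).homogeneousCore 𝒜).toIdeal with hPi
    have hPih : Pi.IsHomogeneous 𝒜 := (((Q i).radical).homogeneousCore 𝒜).isHomogeneous
    set J0 : Ideal A := ⨅ j, ⨅ (_ : j ≠ i), Q j with hJ0
    have hJ0h : J0.IsHomogeneous 𝒜 :=
      Ideal.IsHomogeneous.iInf fun j => Ideal.IsHomogeneous.iInf fun _ => hQh j
    have hPrad : Pi ≤ (Q i).radical := Ideal.toIdeal_homogeneousCore_le _ _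
    obtain ⟨n, hn⟩ :=
      Ideal.exists_pow_le_of_le_radical_of_fg_radical hPrad (IsNoetherian.noetherian _)
    have hex : ∃ k, J0 * Pi ^ k ≤ Q i := ⟨n, le_trans Ideal.mul_le_right hn⟩
    have hk0 : J0 * Pi ^ (Nat.find hex) ≤ Q i := Nat.find_spec hex
    have hk0ne : Nat.find hex ≠ 0 := by
      intro h
      apply hmin i
      have h2 := hk0
      rwa [h, pow_zero, mul_one] at h2
    obtain ⟨m, hm⟩ := Nat.exists_eq_succ_of_ne_zero hk0ne
    have hJlt : ¬ J0 * Pi ^ m ≤ Q i := Nat.find_min hex (by omega)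
    set J : Ideal A := J0 * Pi ^ m with hJdef
    have hJh : J.IsHomogeneous 𝒜 := hJ0h.mul (pow_isHomogeneous 𝒜 hPih m)
    have hIJ : Submodule.colon I J = Submodule.colon (Q i) J := by
      rw [hIQ, colon_iInf]
      refine le_antisymm (iInf_le _ i) (le_iInf fun j => ?_)
      by_cases hj : j = i
      · subst hj; exact le_rfl
      · have hJQj : J ≤ Q j :=
          le_trans Ideal.mul_le_left (le_trans (iInf_le _ j) (iInf_le _ hj))
        rw [show Submodule.colon (Q j) J = ⊤ from colon_eq_top_of_le hJQj]
        exact le_top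
    have hcolonPi : Submodule.colon (Q i) J ≤ Pi :=
      (hQprim i).2.2 _ J (colon_isHomogeneous 𝒜 (hQh i) hJh) hJh (colon_mul_le_self _ _) hJlt
    have hPicolon : Pi ≤ Submodule.colon (Q i) J := by
      intro x hx
      rw [Submodule.mem_colon]
      intro p hp
      rw [smul_eq_mul]
      apply hk0
      rw [hm, pow_succ, ← mul_assoc, mul_comm x p]
      exact Ideal.mul_mem_mul hp hx
    have hPeq : Submodule.colon I J = Pi := hIJ.trans (le_antisymm hcolonPi hPicolon)
    exact ⟨J, hJh, hPeq ▸ gprimary_radical_core_isGPrime 𝒜 (hQprim i).2, hPeq.symm⟩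
  · rintro ⟨J, hJh, hGP, rfl⟩
    obtain ⟨p, hp, hcol⟩ := hGP
    have hIJi : Submodule.colon I J = ⨅ j, Submodule.colon (Q j) J := by
      rw [hIQ, colon_iInf]
    have hle_p : (⨅ j, Submodule.colon (Q j) J) ≤ p := by
      rw [← hIJi, hcol]
      exact Ideal.toIdeal_homogeneousCore_le _ _
    have hinf : (Finset.univ : Finset (Fin r)).inf (fun j => Submodule.colon (Q j) J) ≤ p := by
      rw [Finset.inf_eq_iInf]
      refine le_trans ?_ hle_p
      exact le_iInf fun j => iInf_le_of_le j (iInf_le _ (Finset.mem_univ j))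
    obtain ⟨i, -, hi⟩ := hp.prod_le.1 (le_trans Ideal.prod_le_inf hinf)
    have hJQi : ¬ J ≤ Q i := by
      intro h
      apply hp.ne_top
      rw [eq_top_iff, ← colon_eq_top_of_le h]
      exact hi
    have h1 : Submodule.colon I J ≤ (((Q i).radical).homogeneousCore 𝒜).toIdeal := by
      refine le_trans ?_ ((hQprim i).2.2 _ J (colon_isHomogeneous 𝒜 (hQh i) hJh) hJh
        (colon_mul_le_self _ _) hJQi)
      rw [hIJi]
      exact iInf_le _ i
    have hQip : Q i ≤ p := by
      refine le_trans ?_ hi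
      intro x hx
      rw [Submodule.mem_colon]
      intro q hq
      rw [smul_eq_mul]
      exact Ideal.mul_mem_right q _ hx
    have h2 : (((Q i).radical).homogeneousCore 𝒜).toIdeal ≤ Submodule.colon I J := by
      rw [hcol]
      refine le_homCore 𝒜 (((Q i).radical).homogeneousCore 𝒜).isHomogeneous ?_
      refine le_trans (Ideal.toIdeal_homogeneousCore_le _ _) ?_
      rw [← hp.radical]
      exact Ideal.radical_mono hQip
    exact ⟨i, le_antisymm h1 h2⟩
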